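/- Let S be an EP-EFA with m states and step-length K (the maximum step-length of its symbolic transitions). Then every flat marked data string u ∈ L_fmd(S) with |u| > (m − 1)·K admits a factorization u = p·q·r with q nonempty such that p·q·q·r ∈ L_fmd(S). -/

import Mathlib

attribute [local instance] Classical.propDecidable

universe u v w

/-- A symbolic transition of an EP-EFA: source and target states, event tag,
step-length, and a guard given by its denotation (a set of parameter tuples
of length `len`). -/
structure SymTrans (Q : Type u) (E : Type v) (X : Type w) where
  src : Q
  tgt : Q
  tag : E
  len : ℕ
  guard : Set (List X)
  guard_len : ∀ l ∈ guard, l.length = len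

/-- An Event-Parameters Extended Finite Automaton (EP-EFA): initial states,
marked states, and a set of symbolic transitions. -/
structure EPEFA (Q : Type u) (E : Type v) (X : Type w) where
  init : Set Q
  marked : Set Q
  trans : Set (SymTrans Q E X)

variable {Q : Type u} {E : Type v} {X : Type w}

/-- The flat data string of a parameterized string: the concatenation of all
parameter values in order. -/
def flatData (u : List (E × List X)) : List X := (u.map Prod.snd).flatten

/-- The reverse of a parameterized string: events in reverse order, each
parameter tuple reversed. -/
def strRev (u : List (E × List X)) : List (E × List X) :=
  (u.map fun ev => (ev.1, ev.2.reverse)).reverse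

/-- The reverse of a data string / observation: tuples in reverse order, each
tuple reversed. -/
def obsRev (w : List (List X)) : List (List X) := (w.map List.reverse).reverse

/-- The observation `θ(D(u))` of a parameterized string `u`, determined by the
observability set `ϑ`: strip event tags, delete unobservable parameter values,
drop empty tuples. -/
noncomputable def obsOf (ϑ : Set X) (u : List (E × List X)) : List (List X) :=
  ((u.map Prod.snd).map fun l => l.filter fun a => a ∈ ϑ).filter fun l => l ≠ []

/-- A parameterized event `ev` triggers a concrete transition from `q` to `q'`. -/
def EPEFA.Step (S : EPEFA Q E X) (q : Q) (ev : E × List X) (q' : Q) : Prop :=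
  ∃ t ∈ S.trans, t.src = q ∧ t.tgt = q' ∧ t.tag = ev.1 ∧ ev.2 ∈ t.guard

/-- `S.Path q u q'` : the parameterized string `u` labels a chain of concrete
transitions from `q` to `q'` (with `q →ε q` always). -/
inductive EPEFA.Path (S : EPEFA Q E X) : Q → List (E × List X) → Q → Prop
  | nil (q : Q) : EPEFA.Path S q [] q
  | cons {q q' q'' : Q} {ev : E × List X} {u : List (E × List X)} :
      S.Step q ev q' → EPEFA.Path S q' u q'' → EPEFA.Path S q (ev :: u) q''

/-- The language between a set of source states and a set of target states. -/
def EPEFA.LBtw (S : EPEFA Q E X) (Q1 Q2 : Set Q) : Set (List (E × List X)) :=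
  {u | ∃ q1 ∈ Q1, ∃ q2 ∈ Q2, S.Path q1 u q2}

/-- The generated language `L(S)`. -/
def EPEFA.Lang (S : EPEFA Q E X) : Set (List (E × List X)) :=
  S.LBtw S.init Set.univ

/-- The marked language `L_m(S)`. -/
def EPEFA.LangM (S : EPEFA Q E X) : Set (List (E × List X)) :=
  S.LBtw S.init S.marked

/-- The flat marked data language `L_fmd(S)`. -/
def EPEFA.Lfmd (S : EPEFA Q E X) : Set (List X) := flatData '' S.LangM

/-- The set of observations `Θ(S)`. -/
def EPEFA.ThetaSet (S : EPEFA Q E X) (ϑ : Set X) : Set (List (List X)) :=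
  obsOf ϑ '' S.Lang

/-- The state estimation `Est^S(w)`. -/
def EPEFA.Est (S : EPEFA Q E X) (ϑ : Set X) (w : List (List X)) : Set Q :=
  {q | ∃ q0 ∈ S.init, ∃ u, S.Path q0 u q ∧ obsOf ϑ u = w}

/-- The reverse of a symbolic transition: source and target swapped, guard
denotation reversed tuple-wise. -/
def SymTrans.rev (t : SymTrans Q E X) : SymTrans Q E X where
  src := t.tgt
  tgt := t.src
  tag := t.tag
  len := t.len
  guard := {l | l.reverse ∈ t.guard}
  guard_len := fun l hl => by simpa using t.guard_len l.reverse hl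

/-- The reverse EP-EFA `Sʳ`: all states initial, reversed transitions. -/
def EPEFA.rev (S : EPEFA Q E X) : EPEFA Q E X where
  init := Set.univ
  marked := S.init
  trans := SymTrans.rev '' S.trans

/-- Current-state opacity of `S` w.r.t. secret states `Qs`, non-secret states
`Qns` and the observation function determined by `ϑ`. -/
def EPEFA.CSOpaque (S : EPEFA Q E X) (ϑ : Set X) (Qs Qns : Set Q) : Prop :=
  ∀ u ∈ S.LBtw S.init Qs, ∃ v ∈ S.LBtw S.init Qns, obsOf ϑ u = obsOf ϑ v

/-- Initial-state opacity of `S` w.r.t. secret initial states `Qs`, non-secret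
initial states `Qns` and the observation function determined by `ϑ`. -/
def EPEFA.ISOpaque (S : EPEFA Q E X) (ϑ : Set X) (Qs Qns : Set Q) : Prop :=
  ∀ u ∈ S.LBtw Qs Set.univ, ∃ v ∈ S.LBtw Qns Set.univ, obsOf ϑ u = obsOf ϑ v

/-- Infinite-step opacity of `S` w.r.t. secret states `Qs`, non-secret states
`Qns` and the observation function determined by `ϑ`: every run from an
initial state through a secret state is matched, observation-wise (both the
prefix up to the secret state and the suffix), by a run through a non-secret
state. -/
def EPEFA.InfSOpaque (S : EPEFA Q E X) (ϑ : Set X) (Qs Qns : Set Q) : Prop :=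
  ∀ q0 ∈ S.init, ∀ qs ∈ Qs, ∀ (q : Q) (u u2 : List (E × List X)),
    S.Path q0 u qs → S.Path qs u2 q →
    ∃ q0' ∈ S.init, ∃ qn ∈ Qns, ∃ (q' : Q) (v v2 : List (E × List X)),
      S.Path q0' v qn ∧ S.Path qn v2 q' ∧
      obsOf ϑ u = obsOf ϑ v ∧ obsOf ϑ u2 = obsOf ϑ v2

theorem path_append {S : EPEFA Q E X} {q q' q'' : Q} {u v : List (E × List X)}
    (h1 : S.Path q u q') (h2 : S.Path q' v q'') : S.Path q (u ++ v) q'' := by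
  induction h1 with
  | nil => simpa using h2
  | cons hs _ ih => exact EPEFA.Path.cons hs (ih h2)

theorem flatData_append (u v : List (E × List X)) :
    flatData (u ++ v) = flatData u ++ flatData v := by simp [flatData]

theorem path_len_le {S : EPEFA Q E X} {K : ℕ} (hK : ∀ t ∈ S.trans, t.len ≤ K)
    {q q' : Q} {u : List (E × List X)} (hp : S.Path q u q') :
    ∀ ev ∈ u, ev.2.length ≤ K := by
  induction hp with
  | nil => simp
  | cons hs _ ih =>
    intro e he
    rw [List.mem_cons] at he
    rcases he with he | he
    · subst he
      obtain ⟨t, ht, _, _, _, hg⟩ := hs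
      rw [t.guard_len _ hg]
      exact hK t ht
    · exact ih e he

theorem flat_len_le {K : ℕ} :
    ∀ (u : List (E × List X)), (∀ ev ∈ u, ev.2.length ≤ K) →
    (flatData u).length ≤ (u.countP fun ev => !ev.2.isEmpty) * K := by
  intro u
  induction u with
  | nil => simp [flatData]
  | cons ev u' ih =>
    intro h
    have hev := h ev (by simp)
    rw [List.countP_cons]
    by_cases he : ev.2 = []
    · simpa [flatData, he] using ih fun e he' => h e (List.mem_cons_of_mem _ he')
    · have : (flatData (ev :: u')).length = ev.2.length + (flatData u').length := by
        simp [flatData]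
      rw [this]
      have hc : (!ev.2.isEmpty) = true := by simp [he]
      rw [hc]
      simp only [if_pos rfl]
      have := ih fun e he' => h e (List.mem_cons_of_mem _ he')
      calc ev.2.length + (flatData u').length
          ≤ K + (u'.countP fun ev => !ev.2.isEmpty) * K := by
            exact Nat.add_le_add hev this
        _ = ((u'.countP fun ev => !ev.2.isEmpty) + 1) * K := by ring

theorem loop_lemma [Fintype Q] {S : EPEFA Q E X} {m : ℕ} (hm : Fintype.card Q = m) :
    ∀ (u : List (E × List X)) (q q' : Q) (V : Finset Q), S.Path q u q' →
    m ≤ V.card + u.countP (fun ev => !ev.2.isEmpty) →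
    (∃ s ∈ V, ∃ u1 u2, u = u1 ++ u2 ∧ S.Path q u1 s ∧ S.Path s u2 q')
    ∨ (∃ s : Q, ∃ u1 u2 u3, u = u1 ++ u2 ++ u3 ∧ S.Path q u1 s ∧ S.Path s u2 s ∧
        S.Path s u3 q' ∧ ∃ ev ∈ u2, ev.2 ≠ []) := by
  intro u
  induction u with
  | nil =>
    intro q q' V hp hcard
    simp at hcard
    left
    have hq : q = q' := by cases hp; rfl
    have hVle : V.card ≤ m := by rw [← hm]; exact V.card_le_univ
    have : V.card = Fintype.card Q := by
      rw [hm]; omega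
    have hV : V = Finset.univ := Finset.eq_univ_of_card V this
    exact ⟨q, by simp [hV], [], [], rfl, EPEFA.Path.nil q, hq ▸ EPEFA.Path.nil q⟩
  | cons ev u' ih =>
    intro q q' V hp hcard
    cases hp with
    | cons hs htail =>
      rename_i q1
      by_cases he : ev.2 = []
      · have hcnt : (ev :: u').countP (fun ev => !ev.2.isEmpty) =
            u'.countP (fun ev => !ev.2.isEmpty) := by
          rw [List.countP_cons]; simp [he]
      -- no new checkpoint
        rcases ih q1 q' V htail (by rw [← hcnt]; exact hcard) with
          ⟨s, hsV, u1, u2, hsplit, hp1, hp2⟩ | ⟨s, u1, u2, u3, hsplit, hp1, hp2, hp3, hne⟩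
        · exact Or.inl ⟨s, hsV, ev :: u1, u2, by rw [hsplit]; rfl,
            EPEFA.Path.cons hs hp1, hp2⟩
        · exact Or.inr ⟨s, ev :: u1, u2, u3, by rw [hsplit]; rfl,
            EPEFA.Path.cons hs hp1, hp2, hp3, hne⟩
      · by_cases hqV : q ∈ V
        · exact Or.inl ⟨q, hqV, [], ev :: u', rfl, EPEFA.Path.nil q,
            EPEFA.Path.cons hs htail⟩
        · have hcnt : (ev :: u').countP (fun ev => !ev.2.isEmpty) =
              u'.countP (fun ev => !ev.2.isEmpty) + 1 := by
            rw [List.countP_cons]; simp [he]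
          have hcard' : m ≤ (insert q V).card + u'.countP (fun ev => !ev.2.isEmpty) := by
            rw [Finset.card_insert_of_notMem hqV]
            omega
          rcases ih q1 q' (insert q V) htail hcard' with
            ⟨s, hsV, u1, u2, hsplit, hp1, hp2⟩ | ⟨s, u1, u2, u3, hsplit, hp1, hp2, hp3, hne⟩
          · rcases Finset.mem_insert.mp hsV with hsq | hsV'
            · subst hsq
              exact Or.inr ⟨s, [], ev :: u1, u2, by rw [hsplit]; rfl, EPEFA.Path.nil s,
                EPEFA.Path.cons hs hp1, hp2, ev, by simp, he⟩
            · exact Or.inl ⟨s, hsV', ev :: u1, u2, by rw [hsplit]; rfl,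
                EPEFA.Path.cons hs hp1, hp2⟩
          · exact Or.inr ⟨s, ev :: u1, u2, u3, by rw [hsplit]; rfl,
              EPEFA.Path.cons hs hp1, hp2, hp3, hne⟩

/-- Pumping lemma for EP-EFAs: if `S` has `m` states and step-length (at most)
`K`, then every flat marked data string of length greater than `(m-1)·K` can be
factored as `p ++ q ++ r` with `q` nonempty such that `p ++ q ++ q ++ r` is
again a flat marked data string of `S`. -/
theorem epefa_pumping [Fintype Q] (S : EPEFA Q E X) (m K : ℕ)
    (hm : Fintype.card Q = m) (hK : ∀ t ∈ S.trans, t.len ≤ K)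
    (u : List X) (hu : u ∈ S.Lfmd) (hlen : (m - 1) * K < u.length) :
    ∃ p q r : List X, q ≠ [] ∧ u = p ++ q ++ r ∧ p ++ q ++ q ++ r ∈ S.Lfmd := by
  obtain ⟨w, hw, hfw⟩ := hu
  obtain ⟨q0, hq0, qm, hqm, hpath⟩ := hw
  have hm1 : 1 ≤ m := by
    rw [← hm]
    exact Fintype.card_pos_iff.mpr ⟨q0⟩
  have hlenle : (flatData w).length ≤ (w.countP fun ev => !ev.2.isEmpty) * K :=
    flat_len_le w (path_len_le hK hpath)
  have hcnt : m ≤ w.countP fun ev => !ev.2.isEmpty := by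
    have h1 : (m - 1) * K < (w.countP fun ev => !ev.2.isEmpty) * K := by
      rw [hfw] at hlenle; omega
    have h2 : m - 1 < w.countP fun ev => !ev.2.isEmpty :=
      Nat.lt_of_mul_lt_mul_right h1
    omega
  rcases loop_lemma hm w q0 qm ∅ hpath (by simpa using hcnt) with
    ⟨s, hsV, _⟩ | ⟨s, u1, u2, u3, hsplit, hp1, hp2, hp3, ev, hev, hevne⟩
  · exact absurd hsV (Finset.notMem_empty s)
  · refine ⟨flatData u1, flatData u2, flatData u3, ?_, ?_, ?_⟩
    · intro hnil
      have hnil' : (u2.map Prod.snd).flatten = [] := hnil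
      have h := List.flatten_eq_nil_iff.mp hnil'
      exact hevne (h ev.2 (List.mem_map_of_mem (f := Prod.snd) hev))
    · rw [← hfw, hsplit, flatData_append, flatData_append]
    · refine ⟨u1 ++ u2 ++ u2 ++ u3, ⟨q0, hq0, qm, hqm, ?_⟩, ?_⟩
      · have : S.Path q0 (u1 ++ (u2 ++ (u2 ++ u3))) qm :=
          path_append hp1 (path_append hp2 (path_append hp2 hp3))
        simpa [List.append_assoc] using this
      · simp [flatData_append]
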